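/- The exponential generating function of the central factorials satisfies Σ_{n=0}^∞ x^{[n]}·t^n/n! = (t/2 + √(1+t²/4))^{2x}, as an identity of convergent power series for |t| small. -/

import Mathlib

noncomputable def centralFact (x : ℝ) : ℕ → ℝ
  | 0 => 1
  | n + 1 => x * ∏ i ∈ Finset.range n, (x + ((n : ℝ) + 1) / 2 - 1 - i)

lemma centralFact_rec (x : ℝ) (n : ℕ) :
    centralFact x (n + 2) = (x ^ 2 - ((n : ℝ) / 2) ^ 2) * centralFact x n := by
  cases n with
  | zero => simp [centralFact, Finset.prod_range_succ]; ring
  | succ m =>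
    have h1 : centralFact x (m + 1 + 2) =
        x * ∏ i ∈ Finset.range (m + 2), (x + (((m + 2 : ℕ) : ℝ) + 1) / 2 - 1 - i) := rfl
    have h2 : centralFact x (m + 1) =
        x * ∏ i ∈ Finset.range m, (x + (((m : ℕ) : ℝ) + 1) / 2 - 1 - i) := rfl
    rw [h1, h2, Finset.prod_range_succ, Finset.prod_range_succ']
    push_cast
    rw [Finset.prod_congr rfl (fun i _ => by ring :
      ∀ i ∈ Finset.range m, (x + ((m:ℝ) + 2 + 1) / 2 - 1 - ((i:ℝ) + 1)) =
        (x + ((m:ℝ) + 1) / 2 - 1 - i))]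
    ring

lemma centralFact_bound (x : ℝ) (n : ℕ) :
    |centralFact x n / (n.factorial : ℝ)| ≤ (|x| + 1) ^ (n + 1) := by
  induction n using Nat.twoStepInduction with
  | zero => simp [centralFact]
  | one =>
    have : centralFact x 1 = x := by simp [centralFact]
    simp [this, Nat.factorial]
    nlinarith [abs_nonneg x]
  | more n ih _ =>
    have hfac : ((n + 2).factorial : ℝ) = ((n : ℝ) + 2) * ((n : ℝ) + 1) * (n.factorial : ℝ) := by
      push_cast [Nat.factorial_succ]; ring
    have hfn : (0:ℝ) < (n.factorial : ℝ) := by positivity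
    have key : |x ^ 2 - ((n : ℝ) / 2) ^ 2| ≤ (|x| + 1) ^ 2 * (((n:ℝ) + 2) * ((n:ℝ) + 1)) := by
      have h1 : |x ^ 2 - ((n : ℝ) / 2) ^ 2| ≤ x ^ 2 + ((n:ℝ)/2) ^ 2 := by
        have := abs_sub (x ^ 2) (((n : ℝ) / 2) ^ 2)
        calc |x ^ 2 - ((n : ℝ) / 2) ^ 2| ≤ |x ^ 2| + |((n : ℝ) / 2) ^ 2| := abs_sub _ _
          _ = x ^ 2 + ((n:ℝ)/2) ^ 2 := by rw [abs_of_nonneg (by positivity), abs_of_nonneg (by positivity)]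
      have hn : (0:ℝ) ≤ n := Nat.cast_nonneg n
      have h2 : x ^ 2 ≤ (|x| + 1) ^ 2 := by nlinarith [abs_nonneg x, sq_abs x]
      have h5 : (1:ℝ) ≤ (|x| + 1) ^ 2 := by nlinarith [abs_nonneg x]
      have h3 : (1:ℝ) + ((n:ℝ)/2) ^ 2 ≤ ((n:ℝ) + 2) * ((n:ℝ) + 1) := by nlinarith
      have h4 : ((|x|+1) ^ 2) * (1 + ((n:ℝ)/2) ^ 2) ≤ (|x|+1) ^ 2 * (((n:ℝ)+2)*((n:ℝ)+1)) :=
        mul_le_mul_of_nonneg_left h3 (by positivity)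
      nlinarith [sq_nonneg ((n:ℝ)/2)]
    calc |centralFact x (n + 2) / ((n + 2).factorial : ℝ)|
        = |x ^ 2 - ((n : ℝ) / 2) ^ 2| / (((n:ℝ) + 2) * ((n:ℝ) + 1)) * |centralFact x n / (n.factorial : ℝ)| := by
          rw [centralFact_rec, hfac]
          rw [abs_div, abs_mul, abs_div]
          rw [abs_of_nonneg (by positivity : (0:ℝ) ≤ ((n : ℝ) + 2) * ((n : ℝ) + 1) * (n.factorial : ℝ))]
          field_simp
          rw [Nat.abs_cast]
      _ ≤ (|x| + 1) ^ 2 * |centralFact x n / (n.factorial : ℝ)| := by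
          apply mul_le_mul_of_nonneg_right _ (abs_nonneg _)
          rw [div_le_iff₀ (by positivity)]
          exact key
      _ ≤ (|x| + 1) ^ 2 * (|x| + 1) ^ (n + 1) := by
          apply mul_le_mul_of_nonneg_left ih (by positivity)
      _ = (|x| + 1) ^ (n + 2 + 1) := by ring

section main
variable (x : ℝ)

local notation "M" => |x| + 1
local notation "ε" => (2 * (|x| + 1))⁻¹

noncomputable def aa (x : ℝ) (n : ℕ) : ℝ := centralFact x n / (n.factorial : ℝ)

lemma hM1 : (1:ℝ) ≤ M := by nlinarith [abs_nonneg x]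
lemma hε : (0:ℝ) < ε := by positivity
lemma hMε : M * ε = 2⁻¹ := by
  rw [mul_inv, ← mul_assoc]
  field_simp

lemma bound0 (n : ℕ) (y : ℝ) (hy : |y| ≤ ε) :
    |aa x n * y ^ n| ≤ M * (2⁻¹:ℝ) ^ n := by
  rw [abs_mul, abs_pow]
  calc |aa x n| * |y| ^ n ≤ M ^ (n+1) * ε ^ n := by
        apply mul_le_mul (centralFact_bound x n) (pow_le_pow_left₀ (abs_nonneg y) hy n)
          (by positivity) (by positivity)
    _ = M * (M * ε) ^ n := by rw [mul_pow, pow_succ]; ring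
    _ = M * (2⁻¹:ℝ) ^ n := by rw [hMε]

lemma bound1 (n : ℕ) (y : ℝ) (hy : |y| ≤ ε) :
    |aa x n * ((n:ℝ) * y ^ (n - 1))| ≤ 2 * M ^ 2 * ((n:ℝ) * (2⁻¹:ℝ) ^ n) := by
  cases n with
  | zero => simp
  | succ m =>
    rw [abs_mul, abs_mul, abs_pow, Nat.add_sub_cancel]
    rw [abs_of_nonneg (by positivity : (0:ℝ) ≤ ((m+1:ℕ):ℝ))]
    calc |aa x (m+1)| * (((m+1:ℕ):ℝ) * |y| ^ m)
        ≤ M ^ (m+2) * (((m+1:ℕ):ℝ) * ε ^ m) := by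
          apply mul_le_mul (centralFact_bound x (m+1)) _ (by positivity) (by positivity)
          exact mul_le_mul_of_nonneg_left (pow_le_pow_left₀ (abs_nonneg y) hy m) (by positivity)
      _ = 2 * M ^ 2 * (((m+1:ℕ):ℝ) * (2⁻¹:ℝ) ^ (m+1)) := by
          rw [show M ^ (m+2) * (((m+1:ℕ):ℝ) * ε ^ m) = 2 * M ^ 2 * (((m+1:ℕ):ℝ) * (2⁻¹ * (M * ε) ^ m)) from by
            rw [mul_pow]; push_cast; ring]
          rw [hMε, pow_succ]; ring

lemma bound2 (n : ℕ) (y : ℝ) (hy : |y| ≤ ε) :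
    |aa x n * ((n:ℝ) * (((n - 1 : ℕ):ℝ) * y ^ (n - 2)))| ≤ 4 * M ^ 3 * ((n:ℝ) ^ 2 * (2⁻¹:ℝ) ^ n) := by
  match n with
  | 0 => simp
  | 1 => simp; positivity
  | (m+2) =>
    have e1 : (m + 2 - 1 : ℕ) = m + 1 := rfl
    have e2 : (m + 2 - 2 : ℕ) = m := rfl
    rw [e1, e2, abs_mul, abs_mul, abs_mul, abs_pow]
    rw [abs_of_nonneg (by positivity : (0:ℝ) ≤ ((m+2:ℕ):ℝ)),
        abs_of_nonneg (by positivity : (0:ℝ) ≤ ((m+1:ℕ):ℝ))]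
    calc |aa x (m+2)| * (((m+2:ℕ):ℝ) * (((m+1:ℕ):ℝ) * |y| ^ m))
        ≤ M ^ (m+3) * (((m+2:ℕ):ℝ) * (((m+1:ℕ):ℝ) * ε ^ m)) := by
          apply mul_le_mul (centralFact_bound x (m+2)) _ (by positivity) (by positivity)
          apply mul_le_mul_of_nonneg_left _ (by positivity)
          exact mul_le_mul_of_nonneg_left (pow_le_pow_left₀ (abs_nonneg y) hy m) (by positivity)
      _ = 4 * M ^ 3 * (((m+2:ℕ):ℝ) * ((m+1:ℕ):ℝ) * (2⁻¹:ℝ) ^ (m+2)) := by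
          rw [show M ^ (m+3) * (((m+2:ℕ):ℝ) * (((m+1:ℕ):ℝ) * ε ^ m)) =
              4 * M ^ 3 * (((m+2:ℕ):ℝ) * ((m+1:ℕ):ℝ) * (2⁻¹ * (2⁻¹ * (M * ε) ^ m))) from by
            rw [mul_pow]; push_cast; ring]
          rw [hMε]; ring
      _ ≤ 4 * M ^ 3 * (((m+2:ℕ):ℝ) ^ 2 * (2⁻¹:ℝ) ^ (m+2)) := by
          apply mul_le_mul_of_nonneg_left _ (by positivity)
          apply mul_le_mul_of_nonneg_right _ (by positivity)
          push_cast; nlinarith [Nat.cast_nonneg (α := ℝ) m]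

end main


section main2
variable (x : ℝ)

local notation "M" => |x| + 1
local notation "ε" => (2 * (|x| + 1))⁻¹
local notation "S" => Set.Ioo (-(2 * (|x| + 1))⁻¹ : ℝ) (2 * (|x| + 1))⁻¹

noncomputable def gg (x y : ℝ) : ℝ := ∑' n, aa x n * y ^ n
noncomputable def G1 (x y : ℝ) : ℝ := ∑' n, aa x n * ((n:ℝ) * y ^ (n - 1))
noncomputable def G2 (x y : ℝ) : ℝ :=
  ∑' n, aa x n * ((n:ℝ) * (((n - 1 : ℕ):ℝ) * y ^ (n - 2)))

lemma su_geom (k : ℕ) : Summable (fun n : ℕ => (n:ℝ) ^ k * (2⁻¹:ℝ) ^ n) :=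
  summable_pow_mul_geometric_of_norm_lt_one k (by rw [norm_inv]; norm_num)

lemma su0 : Summable (fun n : ℕ => M * (2⁻¹:ℝ) ^ n) :=
  (summable_geometric_of_lt_one (by norm_num) (by norm_num)).mul_left M

lemma su1 : Summable (fun n : ℕ => 2 * M ^ 2 * ((n:ℝ) * (2⁻¹:ℝ) ^ n)) :=
  ((su_geom 1).mul_left (2 * M ^ 2)).congr (fun n => by simp)

lemma su2 : Summable (fun n : ℕ => 4 * M ^ 3 * ((n:ℝ) ^ 2 * (2⁻¹:ℝ) ^ n)) :=
  (su_geom 2).mul_left (4 * M ^ 3)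

lemma mem_abs {y : ℝ} (hy : y ∈ S) : |y| ≤ ε := le_of_lt (abs_lt.2 ⟨hy.1, hy.2⟩)

lemma sum0 {y : ℝ} (hy : |y| ≤ ε) : Summable (fun n => aa x n * y ^ n) :=
  Summable.of_norm_bounded (su0 x) (fun n => by
    rw [Real.norm_eq_abs]; exact bound0 x n y hy)

lemma sum1 {y : ℝ} (hy : |y| ≤ ε) : Summable (fun n => aa x n * ((n:ℝ) * y ^ (n - 1))) :=
  Summable.of_norm_bounded (su1 x) (fun n => by
    rw [Real.norm_eq_abs]; exact bound1 x n y hy)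

lemma sum2 {y : ℝ} (hy : |y| ≤ ε) :
    Summable (fun n => aa x n * ((n:ℝ) * (((n - 1 : ℕ):ℝ) * y ^ (n - 2)))) :=
  Summable.of_norm_bounded (su2 x) (fun n => by
    rw [Real.norm_eq_abs]; exact bound2 x n y hy)

lemma mem0 : (0:ℝ) ∈ S := by constructor <;> [simp; skip] <;> positivity

lemma hasDeriv_g {y : ℝ} (hy : y ∈ S) : HasDerivAt (gg x) (G1 x y) y := by
  exact hasDerivAt_tsum_of_isPreconnected (su1 x) isOpen_Ioo (convex_Ioo _ _).isPreconnected
    (fun n z _ => (hasDerivAt_pow n z).const_mul (aa x n))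
    (fun n z hz => by rw [Real.norm_eq_abs]; exact bound1 x n z (mem_abs x hz))
    (mem0 x) (sum0 x (by simp; positivity)) hy

lemma term_deriv1 (n : ℕ) (z : ℝ) :
    HasDerivAt (fun w => aa x n * ((n:ℝ) * w ^ (n - 1)))
      (aa x n * ((n:ℝ) * (((n - 1 : ℕ):ℝ) * z ^ (n - 2)))) z := by
  have h := ((hasDerivAt_pow (n - 1) z).const_mul ((n:ℝ))).const_mul (aa x n)
  simpa [Nat.sub_sub, mul_assoc] using h

lemma hasDeriv_G1 {y : ℝ} (hy : y ∈ S) : HasDerivAt (G1 x) (G2 x y) y := by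
  exact hasDerivAt_tsum_of_isPreconnected (su2 x) isOpen_Ioo (convex_Ioo _ _).isPreconnected
    (fun n z _ => term_deriv1 x n z)
    (fun n z hz => by rw [Real.norm_eq_abs]; exact bound2 x n z (mem_abs x hz))
    (mem0 x) (sum1 x (by simp; positivity)) hy

lemma gg_zero : gg x 0 = 1 := by
  rw [gg, tsum_eq_single 0 (fun n hn => by
    match n, hn with
    | (m+1), _ => simp)]
  simp [aa, centralFact]

lemma G1_zero : G1 x 0 = x := by
  rw [G1, tsum_eq_single 1 (fun n hn => by
    match n, hn with
    | 0, _ => simp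
    | (m+2), _ => simp)]
  simp [aa, centralFact]

end main2

section main3
variable (x : ℝ)
local notation "M" => |x| + 1
local notation "ε" => (2 * (|x| + 1))⁻¹
local notation "S" => Set.Ioo (-(2 * (|x| + 1))⁻¹ : ℝ) (2 * (|x| + 1))⁻¹

lemma a_rec (n : ℕ) :
    ((n:ℝ) + 2) * ((n:ℝ) + 1) * aa x (n + 2) = (x ^ 2 - ((n:ℝ)/2) ^ 2) * aa x n := by
  unfold aa
  rw [centralFact_rec]
  have hfac : (((n + 2).factorial : ℕ) : ℝ) = ((n:ℝ)+2) * ((n:ℝ)+1) * (n.factorial : ℝ) := by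
    push_cast [Nat.factorial_succ]; ring
  rw [hfac]
  have h3 : ((n.factorial : ℕ) : ℝ) ≠ 0 := by positivity
  field_simp

lemma termzero (y : ℝ) (n : ℕ) :
    aa x (n+2) * (((n:ℝ)+2) * (((n:ℝ)+1) * y ^ n))
      + y^2/4 * (aa x n * ((n:ℝ) * (((n - 1 : ℕ):ℝ) * y ^ (n - 2))))
    = x^2 * (aa x n * y ^ n) - y/4 * (aa x n * ((n:ℝ) * y ^ (n - 1))) := by
  have key := a_rec x n
  match n with
  | 0 => push_cast at key ⊢; simp at key ⊢; linear_combination key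
  | 1 => push_cast at key ⊢; simp at key ⊢; linear_combination y * key
  | (m+2) =>
    rw [show m + 2 - 1 = m + 1 from rfl, show m + 2 - 2 = m from rfl]
    push_cast at key ⊢
    linear_combination y ^ (m + 2) * key

lemma ode {y : ℝ} (hy : y ∈ S) :
    (1 + y^2/4) * G2 x y = x^2 * gg x y - y/4 * G1 x y := by
  have hyε := mem_abs x hy
  have s0 := sum0 x hyε
  have s1 := sum1 x hyε
  have s2 := sum2 x hyε
  have hA : Summable (fun n => aa x (n+2) * (((n:ℝ)+2) * (((n:ℝ)+1) * y ^ n))) := by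
    apply ((summable_nat_add_iff 2).2 s2).congr
    intro n
    push_cast [Nat.add_sub_cancel]
    ring
  have hshift : G2 x y = ∑' n, aa x (n+2) * (((n:ℝ)+2) * (((n:ℝ)+1) * y ^ n)) := by
    rw [G2, Summable.tsum_eq_zero_add s2, Summable.tsum_eq_zero_add ((summable_nat_add_iff 1).2 s2)]
    simp only [Nat.cast_zero, Nat.cast_one, zero_mul, mul_zero, zero_add, Nat.zero_sub,
      Nat.cast_ofNat]
    rw [show ((1:ℕ) - 1 : ℕ) = 0 from rfl]
    push_cast
    rw [zero_mul, mul_zero, mul_zero, zero_add]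
    exact tsum_congr fun n => by push_cast [Nat.add_sub_cancel]; ring_nf
  have t1 : ∑' n, (aa x (n+2) * (((n:ℝ)+2) * (((n:ℝ)+1) * y ^ n))
        + y^2/4 * (aa x n * ((n:ℝ) * (((n - 1 : ℕ):ℝ) * y ^ (n - 2)))))
      = (∑' n, aa x (n+2) * (((n:ℝ)+2) * (((n:ℝ)+1) * y ^ n)))
        + ∑' n, y^2/4 * (aa x n * ((n:ℝ) * (((n - 1 : ℕ):ℝ) * y ^ (n - 2)))) :=
    Summable.tsum_add hA (s2.mul_left _)
  have t2 : ∑' n, (y^2/4 * (aa x n * ((n:ℝ) * (((n - 1 : ℕ):ℝ) * y ^ (n - 2)))))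
      = y^2/4 * G2 x y := tsum_mul_left
  have t3 : ∑' n, (x^2 * (aa x n * y ^ n) - y/4 * (aa x n * ((n:ℝ) * y ^ (n - 1))))
      = x^2 * gg x y - y/4 * G1 x y := by
    rw [Summable.tsum_sub (s0.mul_left _) (s1.mul_left _), tsum_mul_left, tsum_mul_left]
    rfl
  calc (1 + y^2/4) * G2 x y
      = (∑' n, aa x (n+2) * (((n:ℝ)+2) * (((n:ℝ)+1) * y ^ n))) + y^2/4 * G2 x y := by
        rw [← hshift]; ring
    _ = ∑' n, (aa x (n+2) * (((n:ℝ)+2) * (((n:ℝ)+1) * y ^ n))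
        + y^2/4 * (aa x n * ((n:ℝ) * (((n - 1 : ℕ):ℝ) * y ^ (n - 2))))) := by
        rw [t1, t2]
    _ = ∑' n, (x^2 * (aa x n * y ^ n) - y/4 * (aa x n * ((n:ℝ) * y ^ (n - 1)))) :=
        tsum_congr fun n => termzero x y n
    _ = x^2 * gg x y - y/4 * G1 x y := t3

end main3

section main4
variable (x : ℝ)
local notation "ε" => (2 * (|x| + 1))⁻¹
local notation "S" => Set.Ioo (-(2 * (|x| + 1))⁻¹ : ℝ) (2 * (|x| + 1))⁻¹

noncomputable def ff (x y : ℝ) : ℝ := Real.exp (2 * x * Real.arsinh (y / 2))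
noncomputable def qq (y : ℝ) : ℝ := Real.sqrt (1 + (y/2)^2)
noncomputable def FF1 (x y : ℝ) : ℝ := x * ff x y / qq y

lemma qq_pos (y : ℝ) : 0 < qq y := Real.sqrt_pos.2 (by positivity)
lemma qq_sq (y : ℝ) : qq y ^ 2 = 1 + (y/2)^2 := Real.sq_sqrt (by positivity)
lemma ff_pos (y : ℝ) : 0 < ff x y := Real.exp_pos _

lemma hasDeriv_ff (y : ℝ) : HasDerivAt (ff x) (FF1 x y) y := by
  have h1 : HasDerivAt (fun z : ℝ => z / 2) (1/2) y := (hasDerivAt_id y).div_const 2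
  have h2 := h1.arsinh
  have h3 := (h2.const_mul (2*x)).exp
  convert h3 using 1
  · rfl
  rw [smul_eq_mul, FF1, ff, qq]
  have : Real.sqrt (1 + (y/2)^2) ≠ 0 := (qq_pos y).ne'
  field_simp [qq] at this ⊢

lemma hasDeriv_qq (y : ℝ) : HasDerivAt qq (y / (4 * qq y)) y := by
  have h1 : HasDerivAt (fun z : ℝ => 1 + (z/2)^2) (y/2) y := by
    have h0 := (((hasDerivAt_id y).div_const 2).pow 2).const_add 1
    convert h0 using 1
    · rfl
    · rfl
    · rfl
    simp; ring
  have h2 := h1.sqrt (by positivity)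
  convert h2 using 1
  · rfl
  rw [show Real.sqrt (1 + (y/2)^2) = qq y from rfl]
  have : qq y ≠ 0 := (qq_pos y).ne'
  field_simp
  ring

lemma hasDeriv_FF1 (y : ℝ) :
    HasDerivAt (FF1 x) ((x^2 * ff x y - y/4 * FF1 x y) / qq y ^ 2) y := by
  have h := ((hasDeriv_ff x y).const_mul x).div (hasDeriv_qq y) (qq_pos y).ne'
  convert h using 1
  · rfl
  · rfl
  · rfl
  unfold FF1
  have hq : qq y ≠ 0 := (qq_pos y).ne'
  field_simp

noncomputable def WW (x y : ℝ) : ℝ := G1 x y * ff x y - gg x y * FF1 x y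

lemma hasDeriv_WW {y : ℝ} (hy : y ∈ S) :
    HasDerivAt (WW x) (-(y/4) * WW x y / qq y ^ 2) y := by
  have h := ((hasDeriv_G1 x hy).mul (hasDeriv_ff x y)).sub
    ((hasDeriv_g x hy).mul (hasDeriv_FF1 x y))
  convert h using 1
  · rfl
  · rfl
  · rfl
  have hode : qq y ^ 2 * G2 x y = x^2 * gg x y - y/4 * G1 x y := by
    rw [qq_sq, show 1 + (y/2)^2 = 1 + y^2/4 by ring]
    exact ode x hy
  have hq : qq y ≠ 0 := (qq_pos y).ne'
  rw [WW]
  field_simp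
  linear_combination (-4 * ff x y) * hode

lemma const_of {f : ℝ → ℝ} {s : Set ℝ} (hs : Convex ℝ s) (ho : IsOpen s)
    (hf : ∀ y ∈ s, HasDerivAt f 0 y) {a b : ℝ} (ha : a ∈ s) (hb : b ∈ s) : f a = f b := by
  apply hs.is_const_of_fderivWithin_eq_zero (𝕜 := ℝ)
    (fun y hy => (hf y hy).differentiableAt.differentiableWithinAt) _ ha hb
  intro y hy
  rw [fderivWithin_of_isOpen ho hy, ((hf y hy).hasFDerivAt).fderiv]
  ext z
  simp

lemma WW_zero {y : ℝ} (hy : y ∈ S) : WW x y = 0 := by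
  have hV : ∀ z ∈ S, HasDerivAt (fun w => WW x w * qq w) 0 z := by
    intro z hz
    have h := (hasDeriv_WW x hz).mul (hasDeriv_qq z)
    convert h using 1
    · rfl
    · rfl
    · rfl
    have hq : qq z ≠ 0 := (qq_pos z).ne'
    field_simp
    ring
  have hc : WW x y * qq y = WW x 0 * qq 0 :=
    const_of (convex_Ioo _ _) isOpen_Ioo hV hy (mem0 x)
  have hq0 : qq 0 = 1 := by
    rw [qq]; norm_num
  have hW0 : WW x 0 = 0 := by
    rw [WW, gg_zero, G1_zero, FF1, ff, hq0]
    norm_num [Real.arsinh_zero]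
  rw [hW0, zero_mul] at hc
  exact (mul_eq_zero.1 hc).resolve_right (qq_pos y).ne'

lemma gg_eq_ff {y : ℝ} (hy : y ∈ S) : gg x y = ff x y := by
  have hR : ∀ z ∈ S, HasDerivAt (fun w => gg x w / ff x w) 0 z := by
    intro z hz
    have h := (hasDeriv_g x hz).div (hasDeriv_ff x z) (ff_pos x z).ne'
    convert h using 1
    · rfl
    · rfl
    · rfl
    have hWz := WW_zero x hz
    rw [WW] at hWz
    rw [show G1 x z * ff x z - gg x z * FF1 x z = 0 from hWz, zero_div]
  have hc : gg x y / ff x y = gg x 0 / ff x 0 :=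
    const_of (convex_Ioo _ _) isOpen_Ioo hR hy (mem0 x)
  have hf0 : ff x 0 = 1 := by rw [ff]; norm_num [Real.arsinh_zero]
  rw [gg_zero, hf0, div_one] at hc
  rw [div_eq_one_iff_eq (ff_pos x y).ne'] at hc
  exact hc

end main4

theorem central_factorial_egf (x : ℝ) :
    ∃ ε > (0 : ℝ), ∀ t : ℝ, |t| < ε →
      HasSum (fun n : ℕ => centralFact x n / (n.factorial : ℝ) * t ^ n)
        (Real.exp (2 * x * Real.arsinh (t / 2))) := by
  refine ⟨(2 * (|x| + 1))⁻¹, by positivity, fun t ht => ?_⟩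
  have htS : t ∈ Set.Ioo (-(2 * (|x| + 1))⁻¹ : ℝ) (2 * (|x| + 1))⁻¹ := by
    constructor
    · linarith [neg_abs_le t, abs_lt.1 ht]
    · linarith [le_abs_self t]
  have hsum := sum0 x (le_of_lt ht)
  have := hsum.hasSum
  rw [show ∑' n, aa x n * t ^ n = gg x t from rfl, gg_eq_ff x htS] at this
  exact this
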